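/- Let H be an infinite-dimensional complex Hilbert space and X, Y ∈ G_∞(H) such that X ∩ Y is finite-dimensional. Then there exists Z ∈ G_∞(H) such that both X ∩ Z and Y ∩ Z belong to G_∞(H) (i.e., are closed subspaces of infinite dimension and infinite codimension). -/

import Mathlib

variable {H : Type} [NormedAddCommGroup H] [InnerProductSpace ℂ H] [CompleteSpace H]

local notation "⟪" x ", " y "⟫" => @inner ℂ _ _ x y

/-- In an infinite-dimensional subspace one can find a unit vector orthogonal to any
given finite-dimensional subspace. -/
lemma key_aux (S : Submodule ℂ H) (hS : ¬ FiniteDimensional ℂ S)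
    (F : Submodule ℂ H) [FiniteDimensional ℂ F] :
    ∃ x : H, ‖x‖ = 1 ∧ x ∈ S ∧ ∀ y ∈ F, ⟪x, y⟫ = 0 := by
  have : CompleteSpace F := FiniteDimensional.complete ℂ F
  set ψ : S →ₗ[ℂ] F := F.orthogonalProjectionOnto.toLinearMap.comp S.subtype with hψ
  have hker : LinearMap.ker ψ ≠ ⊥ := by
    intro h
    exact hS (FiniteDimensional.of_injective ψ (LinearMap.ker_eq_bot.mp h))
  obtain ⟨x, hx, hx0⟩ := (Submodule.ne_bot_iff _).mp hker
  have hxF : (x : H) ∈ Fᗮ := by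
    rw [LinearMap.mem_ker] at hx
    exact Submodule.orthogonalProjectionOnto_eq_zero_iff.mp hx
  have hxne : (x : H) ≠ 0 := fun h => hx0 (Subtype.ext h)
  refine ⟨((‖(x : H)‖⁻¹ : ℂ)) • (x : H), ?_, S.smul_mem _ x.2, ?_⟩
  · rw [norm_smul]
    simp only [norm_inv, Complex.norm_real, Real.norm_eq_abs, abs_norm]
    exact inv_mul_cancel₀ (norm_ne_zero_iff.mpr hxne)
  · intro y hy
    rw [inner_smul_left, (Submodule.mem_orthogonal' F (x : H)).mp hxF y hy, mul_zero]

/-- A submodule containing an orthonormal sequence is infinite-dimensional. -/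
lemma notFD_of_orthonormal (S : Submodule ℂ H) (v : ℕ → H) (hv : Orthonormal ℂ v)
    (hm : ∀ n, v n ∈ S) : ¬ FiniteDimensional ℂ S := by
  intro h
  have li : LinearIndependent ℂ (fun n => (⟨v n, hm n⟩ : S)) := by
    apply LinearIndependent.of_comp S.subtype
    exact hv.linearIndependent
  have := li.lt_aleph0_of_finiteDimensional
  simp at this

/-- Membership in the Grassmannian `G_∞(H)`. -/
def inGinf (X : Submodule ℂ H) : Prop :=
  IsClosed (X : Set H) ∧ ¬ FiniteDimensional ℂ X ∧ ¬ FiniteDimensional ℂ Xᗮ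

/-- if `X, Y ∈ G_∞(H)` and `X ⊓ Y` is finite-dimensional, then there
exists `Z ∈ G_∞(H)` such that `X ⊓ Z` and `Y ⊓ Z` both belong to `G_∞(H)`. -/
theorem stmt17 (hH : ¬ FiniteDimensional ℂ H)
    (X Y : Submodule ℂ H) (hX : inGinf X) (hY : inGinf Y)
    (hXY : FiniteDimensional ℂ (X ⊓ Y : Submodule ℂ H)) :
    ∃ Z : Submodule ℂ H, inGinf Z ∧ inGinf (X ⊓ Z) ∧ inGinf (Y ⊓ Z) := by
  classical
  have hTop : ¬ FiniteDimensional ℂ (⊤ : Submodule ℂ H) := by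
    intro h
    exact hH (Module.Finite.equiv (Submodule.topEquiv))
  -- components of a triple
  set cset : H × H × H → Set H := fun p => {p.1, p.2.1, p.2.2} with hcset
  set P : H × H × H → Prop := fun p =>
    p.1 ∈ X ∧ p.2.1 ∈ Y ∧ ‖p.1‖ = 1 ∧ ‖p.2.1‖ = 1 ∧ ‖p.2.2‖ = 1 ∧
      ⟪p.1, p.2.1⟫ = 0 ∧ ⟪p.1, p.2.2⟫ = 0 ∧ ⟪p.2.1, p.2.2⟫ = 0 with hP
  set r : H × H × H → H × H × H → Prop := fun p q =>
    ∀ u ∈ cset p, ∀ v ∈ cset q, ⟪u, v⟫ = 0 ∧ ⟪v, u⟫ = 0 with hr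
  obtain ⟨f, hPf, hrf⟩ : ∃ f : ℕ → H × H × H, (∀ n, P (f n)) ∧
      ∀ m n, m < n → r (f m) (f n) := by
    apply exists_seq_of_forall_finset_exists P r
    intro s hs
    set T : Set H := ⋃ p ∈ (s : Set (H × H × H)), cset p with hT
    have hTfin : T.Finite :=
      s.finite_toSet.biUnion fun p _ => (Set.finite_singleton _).insert _ |>.insert _
    have : FiniteDimensional ℂ (Submodule.span ℂ T) :=
      FiniteDimensional.span_of_finite ℂ hTfin
    obtain ⟨a, ha1, haX, haF⟩ := key_aux X hX.2.1 (Submodule.span ℂ T)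
    have : FiniteDimensional ℂ (Submodule.span ℂ (insert a T)) :=
      FiniteDimensional.span_of_finite ℂ (hTfin.insert a)
    obtain ⟨b, hb1, hbY, hbF⟩ := key_aux Y hY.2.1 (Submodule.span ℂ (insert a T))
    have : FiniteDimensional ℂ (Submodule.span ℂ (insert b (insert a T))) :=
      FiniteDimensional.span_of_finite ℂ ((hTfin.insert a).insert b)
    obtain ⟨c, hc1, -, hcF⟩ := key_aux ⊤ hTop (Submodule.span ℂ (insert b (insert a T)))
    have haT : ∀ u ∈ T, ⟪a, u⟫ = 0 := fun u hu => haF u (Submodule.subset_span hu)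
    have hbT : ∀ u ∈ insert a T, ⟪b, u⟫ = 0 := fun u hu => hbF u (Submodule.subset_span hu)
    have hcT : ∀ u ∈ insert b (insert a T), ⟪c, u⟫ = 0 :=
      fun u hu => hcF u (Submodule.subset_span hu)
    refine ⟨(a, b, c), ?_, ?_⟩
    · refine ⟨haX, hbY, ha1, hb1, hc1, ?_, ?_, ?_⟩
      · rw [inner_eq_zero_symm]; exact hbT a (Set.mem_insert a T)
      · rw [inner_eq_zero_symm]; exact hcT a (Set.mem_insert_of_mem _ (Set.mem_insert a T))
      · rw [inner_eq_zero_symm]; exact hcT b (Set.mem_insert b _)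
    · intro x hxs u hu v hv
      have huT : u ∈ T := Set.mem_biUnion hxs hu
      have hv0 : ⟪v, u⟫ = 0 := by
        rcases hv with hv | hv | hv
        · subst hv; exact haT u huT
        · subst hv; exact hbT u (Set.mem_insert_of_mem _ huT)
        · simp only [Set.mem_singleton_iff] at hv; subst hv
          exact hcT u (Set.mem_insert_of_mem _ (Set.mem_insert_of_mem _ huT))
      exact ⟨inner_eq_zero_symm.mpr hv0, hv0⟩
  set a : ℕ → H := fun n => (f n).1 with ha
  set b : ℕ → H := fun n => (f n).2.1 with hb
  set c : ℕ → H := fun n => (f n).2.2 with hc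
  -- the big orthonormal family
  set G : ℕ × Fin 3 → H := fun q => [a q.1, b q.1, c q.1].get q.2 with hG
  have hGmem : ∀ q : ℕ × Fin 3, G q ∈ cset (f q.1) := by
    rintro ⟨n, i⟩
    fin_cases i
    · exact Set.mem_insert _ _
    · exact Set.mem_insert_of_mem _ (Set.mem_insert _ _)
    · exact Set.mem_insert_of_mem _ (Set.mem_insert_of_mem _ rfl)
  have hGnorm : ∀ q : ℕ × Fin 3, ‖G q‖ = 1 := by
    rintro ⟨n, i⟩
    obtain ⟨-, -, h1, h2, h3, -⟩ := hPf n
    fin_cases i <;> assumption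
  have hGorth : ∀ q q' : ℕ × Fin 3, q ≠ q' → ⟪G q, G q'⟫ = 0 := by
    rintro ⟨m, i⟩ ⟨n, j⟩ hne
    rcases lt_trichotomy m n with h | h | h
    · exact (hrf m n h _ (hGmem (m, i)) _ (hGmem (n, j))).1
    · subst h
      have hij : i ≠ j := by simpa using hne
      obtain ⟨-, -, -, -, -, h12, h13, h23⟩ := hPf m
      fin_cases i <;> fin_cases j <;>
        first
          | exact absurd rfl hij
          | assumption
          | (rw [inner_eq_zero_symm]; assumption)
    · exact (hrf n m h _ (hGmem (n, j)) _ (hGmem (m, i))).2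
  have hGon : Orthonormal ℂ G := by
    rw [orthonormal_iff_ite]
    intro q q'
    by_cases h : q = q'
    · subst h
      simp only [if_pos rfl]
      rw [inner_self_eq_norm_sq_to_K, hGnorm q]
      norm_num
    · rw [if_neg h]
      exact hGorth q q' h
  have haon : Orthonormal ℂ a := hGon.comp (fun n => (n, 0)) (fun m n h => by simpa using h)
  have hbon : Orthonormal ℂ b := hGon.comp (fun n => (n, 1)) (fun m n h => by simpa using h)
  have hcon : Orthonormal ℂ c := hGon.comp (fun n => (n, 2)) (fun m n h => by simpa using h)
  set K : Submodule ℂ H := Submodule.span ℂ (Set.range a ∪ Set.range b) with hK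
  set Z : Submodule ℂ H := K.topologicalClosure with hZ
  have haZ : ∀ n, a n ∈ Z := fun n =>
    K.le_topologicalClosure (Submodule.subset_span (Or.inl ⟨n, rfl⟩))
  have hbZ : ∀ n, b n ∈ Z := fun n =>
    K.le_topologicalClosure (Submodule.subset_span (Or.inr ⟨n, rfl⟩))
  have hZorth : Zᗮ = Kᗮ := by
    rw [hZ, ← Submodule.orthogonal_orthogonal_eq_closure, Submodule.triorthogonal_eq_orthogonal]
  have hcZ : ∀ n, c n ∈ Zᗮ := by
    intro n
    rw [hZorth, Submodule.mem_orthogonal']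
    intro u hu
    induction hu using Submodule.span_induction with
    | mem x hx =>
      rcases hx with ⟨m, rfl⟩ | ⟨m, rfl⟩
      · exact hGorth (n, 2) (m, 0) (by simp)
      · exact hGorth (n, 2) (m, 1) (by simp)
    | zero => exact inner_zero_right _
    | add x y _ _ hx hy => rw [inner_add_right, hx, hy, add_zero]
    | smul t x _ hx => rw [inner_smul_right, hx, mul_zero]
  have hZclosed : IsClosed (Z : Set H) := Submodule.isClosed_topologicalClosure K
  have hZinf : ¬ FiniteDimensional ℂ Z := notFD_of_orthonormal Z a haon haZ
  have hZperp : ¬ FiniteDimensional ℂ Zᗮ := notFD_of_orthonormal Zᗮ c hcon hcZ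
  have haXZ : ∀ n, a n ∈ X ⊓ Z := fun n => Submodule.mem_inf.mpr ⟨(hPf n).1, haZ n⟩
  have hbYZ : ∀ n, b n ∈ Y ⊓ Z := fun n => Submodule.mem_inf.mpr ⟨(hPf n).2.1, hbZ n⟩
  refine ⟨Z, ⟨hZclosed, hZinf, hZperp⟩, ⟨?_, ?_, ?_⟩, ⟨?_, ?_, ?_⟩⟩
  · rw [Submodule.coe_inf]
    exact hX.1.inter hZclosed
  · exact notFD_of_orthonormal _ a haon haXZ
  · intro h
    exact hX.2.2 (Submodule.finiteDimensional_of_le (S₂ := (X ⊓ Z)ᗮ)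
      (Submodule.orthogonal_le inf_le_left))
  · rw [Submodule.coe_inf]
    exact hY.1.inter hZclosed
  · exact notFD_of_orthonormal _ b hbon hbYZ
  · intro h
    exact hY.2.2 (Submodule.finiteDimensional_of_le (S₂ := (Y ⊓ Z)ᗮ)
      (Submodule.orthogonal_le inf_le_left))
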